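/- arXiv:2506.21787 — 3 statements merged into one kernel-verified Lean document; each statement's English description precedes it below -/
import Mathlib

section
/- Let n ≥ 2 and let x, y ∈ {0,1}^n be binary vectors with first coordinate x_1 = y_1 = 1. If code(x) < code(y), then λ#_n(code(x)) < λ#_n(code(y)). -/
/-- Integer encoding of a binary vector (MSB first): code(x) = Σ x_j 2^(m-j). -/
def code (x : List Bool) : ℕ := x.foldl (fun a b => 2 * a + (if b then 1 else 0)) 0

/-- m-bit binary representation (MSB first) of an integer k. -/
def decode (m k : ℕ) : List Bool := (List.range m).map (fun j => k.testBit (m - 1 - j))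

/-- Agreement-indicator map: λ(x) lists 𝟙(x_i = x_j) for pairs i < j in lex order. -/
def lam : List Bool → List Bool
  | [] => []
  | a :: t => (t.map (fun b => a == b)) ++ lam t

/-- Integer-level map λ#_n. -/
def lambdaSharp (n k : ℕ) : ℕ := code (lam (decode n k))

/-- Encoded vertices of 𝟙-CUT(n): v^n(k) = λ#_n(2^(n-1) + k - 1). -/
def v (n k : ℕ) : ℕ := lambdaSharp n (2 ^ (n - 1) + k - 1)

lemma code_foldl (l : List Bool) :
    ∀ c, l.foldl (fun a b => 2 * a + (if b then 1 else 0)) c =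
      c * 2 ^ l.length + l.foldl (fun a b => 2 * a + (if b then 1 else 0)) 0 := by
  induction l with
  | nil => intro c; simp
  | cons a t ih =>
    intro c
    simp only [List.foldl_cons, List.length_cons]
    rw [ih, ih (2 * 0 + _)]
    ring

lemma code_cons (a : Bool) (t : List Bool) :
    code (a :: t) = (if a then 1 else 0) * 2 ^ t.length + code t := by
  unfold code
  rw [List.foldl_cons, code_foldl]
  simp

lemma code_append (a b : List Bool) :
    code (a ++ b) = code a * 2 ^ b.length + code b := by
  unfold code
  rw [List.foldl_append, code_foldl]

lemma code_lt (l : List Bool) : code l < 2 ^ l.length := by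
  induction l with
  | nil => simp [code]
  | cons a t ih =>
    rw [code_cons]
    have : (if a then 1 else 0) ≤ 1 := by split <;> simp
    calc (if a then 1 else 0) * 2 ^ t.length + code t
        ≤ 1 * 2 ^ t.length + code t := by
          exact Nat.add_le_add_right (Nat.mul_le_mul_right _ this) _
      _ < 2 ^ t.length + 2 ^ t.length := by omega
      _ = 2 ^ (a :: t).length := by simp [List.length_cons, pow_succ]; ring

lemma decode_succ (m k : ℕ) : decode (m + 1) k = k.testBit m :: decode m k := by
  rw [decode, List.range_succ_eq_map, List.map_cons, List.map_map]
  rw [decode]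
  congr 1
  apply List.map_congr_left
  intro j _
  simp only [Function.comp_apply]
  congr 1
  omega

lemma decode_code (x : List Bool) : decode x.length (code x) = x := by
  induction x with
  | nil => simp [decode]
  | cons a t ih =>
    rw [List.length_cons, decode_succ, code_cons]
    have hb : (if a then 1 else 0) * 2 ^ t.length = 2 ^ t.length * (if a then 1 else 0) :=
      Nat.mul_comm _ _
    congr 1
    case _ =>
      rw [hb, Nat.testBit_two_pow_mul_add _ (code_lt t)]
      simp
      cases a <;> simp
    case _ =>
      rw [decode]
      conv_rhs => rw [← ih, decode]
      apply List.map_congr_left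
      intro j hj
      rw [List.mem_range] at hj
      rw [hb, Nat.testBit_two_pow_mul_add _ (code_lt t)]
      rw [if_pos (by omega)]

lemma lam_length_eq : ∀ (x y : List Bool), x.length = y.length →
    (lam x).length = (lam y).length := by
  intro x
  induction x with
  | nil => intro y h; cases y <;> simp_all
  | cons a t ih =>
    intro y h
    cases y with
    | nil => simp at h
    | cons b s =>
      simp only [List.length_cons, Nat.add_right_cancel_iff] at h
      simp [lam, List.length_append, h, ih s h]

theorem stmt_4 (n : ℕ) (hn : 2 ≤ n) (x y : List Bool)
    (hxlen : x.length = n) (hylen : y.length = n)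
    (hx1 : x.head? = some true) (hy1 : y.head? = some true)
    (h : code x < code y) :
    lambdaSharp n (code x) < lambdaSharp n (code y) := by
  obtain ⟨xt, rfl⟩ : ∃ xt, x = true :: xt := by
    cases x with
    | nil => simp at hx1
    | cons a t => simp at hx1; exact ⟨t, by rw [hx1]⟩
  obtain ⟨yt, rfl⟩ : ∃ yt, y = true :: yt := by
    cases y with
    | nil => simp at hy1
    | cons a t => simp at hy1; exact ⟨t, by rw [hy1]⟩
  have hdx : decode n (code (true :: xt)) = true :: xt := by rw [← hxlen, decode_code]
  have hdy : decode n (code (true :: yt)) = true :: yt := by rw [← hylen, decode_code]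
  rw [lambdaSharp, lambdaSharp, hdx, hdy]
  have hmapx : xt.map (fun b => true == b) = xt := by
    simp
  have hmapy : yt.map (fun b => true == b) = yt := by
    simp
  have hlamx : lam (true :: xt) = xt ++ lam xt := by rw [lam]; rw [hmapx]
  have hlamy : lam (true :: yt) = yt ++ lam yt := by rw [lam]; rw [hmapy]
  rw [hlamx, hlamy, code_append, code_append]
  have hlen : xt.length = yt.length := by
    simp only [List.length_cons] at hxlen hylen; omega
  have hL : (lam xt).length = (lam yt).length := lam_length_eq _ _ hlen
  have hcx : code xt < code yt := by
    rw [code_cons, code_cons] at h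
    simp only [if_pos] at h
    rw [hlen] at h
    omega
  calc code xt * 2 ^ (lam xt).length + code (lam xt)
      < code xt * 2 ^ (lam xt).length + 2 ^ (lam xt).length := by
        exact Nat.add_lt_add_left (code_lt _) _
    _ = (code xt + 1) * 2 ^ (lam xt).length := by ring
    _ ≤ code yt * 2 ^ (lam xt).length := Nat.mul_le_mul_right _ hcx
    _ = code yt * 2 ^ (lam yt).length := by rw [hL]
    _ ≤ code yt * 2 ^ (lam yt).length + code (lam yt) := Nat.le_add_right _ _
end

section
/- For every integer N ≥ 2 and every integer k ≥ 1, S^N(S^{2N}(k)) = S^N(k); that is, precomposing the alternating cycle function with period parameter N by the one with period parameter 2N leaves it unchanged. -/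
/-- The alternating cycle function S^N(k). -/
def altCycle (N k : ℕ) : ℕ :=
  if ((k - 1) / N) % 2 = 0 then N + 1 - (k - ((k - 1) / N) * N)
  else k - ((k - 1) / N) * N

lemma altCycle_formula (N q s : ℕ) (hN : 0 < N) (hs : s < N) :
    altCycle N (q * N + s + 1) = if q % 2 = 0 then N - s else s + 1 := by
  unfold altCycle
  have h0 : q * N + s + 1 - 1 = s + q * N := by omega
  have h1 : (s + q * N) / N = q := by
    rw [Nat.add_mul_div_right _ _ hN, Nat.div_eq_of_lt hs]; omega
  rw [h0, h1]
  have h2 : q * N + s + 1 - q * N = s + 1 := by omega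
  rw [h2]
  by_cases h : q % 2 = 0 <;> simp [h] <;> omega

theorem stmt_13 (N : ℕ) (hN : 2 ≤ N) (k : ℕ) (hk : 1 ≤ k) :
    altCycle N (altCycle (2 * N) k) = altCycle N k := by
  have hN0 : 0 < N := by omega
  set d := (k - 1) / N with hd
  set r := (k - 1) % N with hr
  have hrN : r < N := Nat.mod_lt _ hN0
  have hk1 : k = d * N + r + 1 := by
    have h := Nat.div_add_mod (k - 1) N
    have h2 : d * N = N * ((k - 1) / N) := by rw [hd, Nat.mul_comm]
    omega
  have hdd : d = 2 * (d / 2) + d % 2 := (Nat.div_add_mod d 2).symm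
  have hm : (d % 2) * N + r < 2 * N := by
    have : d % 2 < 2 := Nat.mod_lt _ (by norm_num)
    interval_cases h : d % 2 <;> omega
  have hk2 : k = (d / 2) * (2 * N) + ((d % 2) * N + r) + 1 := by
    have h3 : d * N = (d / 2) * (2 * N) + (d % 2) * N := by
      calc d * N = (2 * (d / 2) + d % 2) * N := by rw [← hdd]
        _ = (d / 2) * (2 * N) + (d % 2) * N := by ring
    omega
  have hRHS : altCycle N k = if d % 2 = 0 then N - r else r + 1 := by
    rw [hk1]; exact altCycle_formula N d r hN0 hrN
  have hinner : altCycle (2 * N) k =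
      if (d / 2) % 2 = 0 then 2 * N - ((d % 2) * N + r) else (d % 2) * N + r + 1 := by
    rw [hk2]; exact altCycle_formula (2 * N) (d / 2) _ (by omega) hm
  rw [hRHS, hinner]
  by_cases hq : (d / 2) % 2 = 0 <;> by_cases hp : d % 2 = 0
  · rw [if_pos hq, if_pos hp, hp,
      show 2 * N - (0 * N + r) = 1 * N + (N - r - 1) + 1 from by omega,
      altCycle_formula N 1 (N - r - 1) hN0 (by omega)]
    norm_num; omega
  · have hp1 : d % 2 = 1 := by omega
    rw [if_pos hq, if_neg hp, hp1,
      show 2 * N - (1 * N + r) = 0 * N + (N - r - 1) + 1 from by omega,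
      altCycle_formula N 0 (N - r - 1) hN0 (by omega)]
    norm_num; omega
  · rw [if_neg hq, if_pos hp, hp, altCycle_formula N 0 r hN0 hrN,
      if_pos (by norm_num : (0:ℕ) % 2 = 0)]
  · have hp1 : d % 2 = 1 := by omega
    rw [if_neg hq, if_neg hp, hp1, altCycle_formula N 1 r hN0 hrN,
      if_neg (by norm_num : ¬ (1:ℕ) % 2 = 0)]
end

section
/- For every integer N ≥ 2, every integer m ≥ 1, and every integer k ≥ 1, S^N(S^{2^m N}(k)) = S^N(k); that is, the alternating cycle function with parameter N is invariant under precomposition by the alternating cycle function with parameter 2^m N for any power-of-two multiple. -/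
lemma altCycle_eq (N k : ℕ) (hN : 1 ≤ N) (hk : 1 ≤ k) :
    altCycle N k = if ((k - 1) / N) % 2 = 0 then N - (k - 1) % N else (k - 1) % N + 1 := by
  unfold altCycle
  have h := Nat.div_add_mod' (k - 1) N
  have hlt := Nat.mod_lt (k - 1) (show 0 < N by omega)
  generalize hqN : (k - 1) / N * N = t at h
  split <;> omega

lemma reflect_div_mod (A N r : ℕ) (hN : 0 < N) (hr : r < A * N) :
    (A * N - 1 - r) / N = A - 1 - r / N ∧ (A * N - 1 - r) % N = N - 1 - r % N := by
  have hs : r % N < N := Nat.mod_lt _ hN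
  have hrs : r / N * N + r % N = r := Nat.div_add_mod' r N
  have hp : r / N < A := by
    by_contra hcon
    push_neg at hcon
    have : A * N ≤ r / N * N := Nat.mul_le_mul_right N hcon
    omega
  obtain ⟨c, hc⟩ : ∃ c, A = r / N + c + 1 := ⟨A - r / N - 1, by omega⟩
  have h2 : A * N = r / N * N + c * N + N := by rw [hc]; ring
  have key : A * N - 1 - r = N * c + (N - 1 - r % N) := by
    have h3 : N * c = c * N := Nat.mul_comm _ _
    generalize r / N * N = P at h2 hrs
    generalize c * N = C at h2 h3
    generalize A * N = AA at h2 ⊢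
    omega
  constructor
  · rw [key, Nat.mul_add_div hN]
    have h4 : (N - 1 - r % N) / N = 0 := Nat.div_eq_of_lt (by omega)
    rw [h4]
    omega
  · rw [key, Nat.mul_add_mod, Nat.mod_eq_of_lt (by omega)]

theorem stmt_14 (N : ℕ) (hN : 2 ≤ N) (m : ℕ) (hm : 1 ≤ m) (k : ℕ) (hk : 1 ≤ k) :
    altCycle N (altCycle (2 ^ m * N) k) = altCycle N k := by
  set M := 2 ^ m * N with hMdef
  have hNpos : 0 < N := by omega
  have hMpos : 0 < M := by positivity
  have hM1 : 1 ≤ M := hMpos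
  have hNdvd : N ∣ M := ⟨2 ^ m, by rw [hMdef]; ring⟩
  obtain ⟨t, ht2⟩ : ∃ t, 2 ^ m = 2 * t := by
    obtain ⟨t, ht⟩ := dvd_pow_self 2 (Nat.one_le_iff_ne_zero.mp hm)
    exact ⟨t, ht⟩
  have hr : (k - 1) % M < M := Nat.mod_lt _ hMpos
  have hs : (k - 1) % M % N < N := Nat.mod_lt _ hNpos
  have hmodmod : (k - 1) % M % N = (k - 1) % N := Nat.mod_mod_of_dvd _ hNdvd
  -- (k-1)/N = (k-1)%M / N + (k-1)/M * 2^m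
  have hk1 : k - 1 = (k - 1) % M + ((k - 1) / M * 2 ^ m) * N := by
    have h := Nat.div_add_mod' (k - 1) M
    have : (k - 1) / M * 2 ^ m * N = (k - 1) / M * M := by rw [hMdef]; ring
    omega
  have hp : (k - 1) / N = (k - 1) % M / N + (k - 1) / M * 2 ^ m := by
    conv_lhs => rw [hk1]
    rw [Nat.add_mul_div_right _ _ hNpos]
  obtain ⟨w, hw⟩ : ∃ w, (k - 1) / M * 2 ^ m = 2 * w := ⟨(k - 1) / M * t, by rw [ht2]; ring⟩
  have hparity : (k - 1) / N % 2 = (k - 1) % M / N % 2 := by rw [hp, hw]; omega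
  rw [altCycle_eq M k hM1 hk, altCycle_eq N k (by omega) hk]
  split
  · -- quotient mod M even: big map gives M - (k-1)%M
    have hx1 : 1 ≤ M - (k - 1) % M := by omega
    rw [altCycle_eq N _ (by omega) hx1]
    have hsub : M - (k - 1) % M - 1 = M - 1 - (k - 1) % M := by omega
    have href := reflect_div_mod (2 ^ m) N ((k - 1) % M) hNpos (by omega)
    have hu : (k - 1) % M / N < 2 ^ m := by
      by_contra hcon
      push_neg at hcon
      have h1 : 2 ^ m * N ≤ (k - 1) % M / N * N := Nat.mul_le_mul_right N hcon
      have h2 : (k - 1) % M / N * N ≤ (k - 1) % M := Nat.div_mul_le_self _ _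
      omega
    rw [← hMdef] at href
    rw [hsub, href.1, href.2, hparity, ht2]
    split_ifs <;> omega
  · -- quotient mod M odd: big map gives (k-1)%M + 1
    have hx1 : 1 ≤ (k - 1) % M + 1 := by omega
    rw [altCycle_eq N _ (by omega) hx1]
    simp only [Nat.add_sub_cancel]
    rw [hparity, hmodmod]
end
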